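/- Moment extraction from eigenrelation: under the hypotheses of the previous statement, if additionally 𝓤 is a vector of linear functionals with orthogonality (x^{2k}𝓤)(𝓑ₘ) = 0 for k < m and 𝓤(𝓑₀) invertible, then the (1,1) block of Jⁿ satisfies (Jⁿ)₁₁ = (x^{2n}𝓤)(𝓑₀)·(𝓤(𝓑₀))⁻¹ for all n ∈ ℕ. -/
import Mathlib


open Polynomial

/-- Product of two infinite block matrices (entries are 2×2 complex blocks). -/
noncomputable def blockMul (X Y : ℕ → ℕ → Matrix (Fin 2) (Fin 2) ℂ) :
    ℕ → ℕ → Matrix (Fin 2) (Fin 2) ℂ :=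
  fun i j => ∑' k : ℕ, X i k * Y k j

/-- Powers of an infinite block matrix. -/
noncomputable def blockPow (J : ℕ → ℕ → Matrix (Fin 2) (Fin 2) ℂ) : ℕ → ℕ → ℕ → Matrix (Fin 2) (Fin 2) ℂ
  | 0 => fun i j => if i = j then 1 else 0
  | n + 1 => blockMul (blockPow J n) J

/-- The vector of linear functionals `𝓤 = [u¹ u²]ᵀ` applied to a vector polynomial:
`𝓤(𝓟)ᵢⱼ = ⟨uʲ, pᵢ⟩`. -/
noncomputable def Uapp (u : Fin 2 → (Polynomial ℂ →ₗ[ℂ] ℂ))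
    (P : Matrix (Fin 2) (Fin 1) (Polynomial ℂ)) : Matrix (Fin 2) (Fin 2) ℂ :=
  Matrix.of fun i j => u j (P i 0)

lemma Uapp_mapC_mul (u : Fin 2 → (Polynomial ℂ →ₗ[ℂ] ℂ))
    (M : Matrix (Fin 2) (Fin 2) ℂ) (P : Matrix (Fin 2) (Fin 1) (Polynomial ℂ)) :
    Uapp u ((M.map Polynomial.C) * P) = M * Uapp u P := by
  ext i j
  simp only [Uapp, Matrix.of_apply, Matrix.mul_apply, Matrix.map_apply]
  rw [map_sum]
  congr 1; ext l
  rw [← Polynomial.smul_eq_C_mul, map_smul, smul_eq_mul]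

lemma Uapp_sum (u : Fin 2 → (Polynomial ℂ →ₗ[ℂ] ℂ)) (s : Finset ℕ)
    (f : ℕ → Matrix (Fin 2) (Fin 1) (Polynomial ℂ)) :
    Uapp u (∑ k ∈ s, f k) = ∑ k ∈ s, Uapp u (f k) := by
  ext i j
  simp [Uapp, Matrix.sum_apply, map_sum]

lemma mapC_sum (s : Finset ℕ) (f : ℕ → Matrix (Fin 2) (Fin 2) ℂ) :
    (∑ k ∈ s, f k).map Polynomial.C = ∑ k ∈ s, (f k).map Polynomial.C := by
  ext i j
  simp [Matrix.map_apply, Matrix.sum_apply, map_sum]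

lemma blockPow_banded (J : ℕ → ℕ → Matrix (Fin 2) (Fin 2) ℂ)
    (hJ0 : ∀ i j : ℕ, (i + 1 < j ∨ j + 1 < i) → J i j = 0) :
    ∀ n j, n < j → blockPow J n 0 j = 0 := by
  intro n
  induction n with
  | zero => intro j hj; simp [blockPow]; omega
  | succ n ih =>
    intro j hj
    have h : ∀ k, blockPow J n 0 k * J k j = 0 := by
      intro k
      by_cases hk : n < k
      · rw [ih k hk, zero_mul]
      · rw [hJ0 k j (Or.inl (by omega)), mul_zero]
    show blockMul (blockPow J n) J 0 j = 0
    simp [blockMul, h]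

lemma blockPow_succ_eq_sum (J : ℕ → ℕ → Matrix (Fin 2) (Fin 2) ℂ)
    (hJ0 : ∀ i j : ℕ, (i + 1 < j ∨ j + 1 < i) → J i j = 0) (n j : ℕ) :
    blockPow J (n+1) 0 j = ∑ k ∈ Finset.range (n+1), blockPow J n 0 k * J k j := by
  show blockMul (blockPow J n) J 0 j = _
  unfold blockMul
  exact tsum_eq_sum (fun k hk => by
    rw [blockPow_banded J hJ0 n k (by simpa using hk), zero_mul])

/-- Moment extraction: with orthogonality `(x²ᵏ𝓤)(𝓑ₘ) = 0` for `k < m` and `𝓤(𝓑₀)`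
invertible, the `(1,1)` block of `Jⁿ` is `(x²ⁿ𝓤)(𝓑₀)·(𝓤(𝓑₀))⁻¹`. -/
theorem stmt_16 (A B C : ℕ → Matrix (Fin 2) (Fin 2) ℂ)
    (J : ℕ → ℕ → Matrix (Fin 2) (Fin 2) ℂ)
    (hJd : ∀ m, J m m = B m) (hJu : ∀ m, J m (m + 1) = A m)
    (hJl : ∀ m, J (m + 1) m = C (m + 1))
    (hJ0 : ∀ i j : ℕ, (i + 1 < j ∨ j + 1 < i) → J i j = 0)
    (Bv : ℕ → Matrix (Fin 2) (Fin 1) (Polynomial ℂ))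
    (hrec0 : (X ^ 2 : Polynomial ℂ) • Bv 0 =
      (A 0).map Polynomial.C * Bv 1 + (B 0).map Polynomial.C * Bv 0)
    (hrec : ∀ (m : ℕ), 1 ≤ m →
      (X ^ 2 : Polynomial ℂ) • Bv m =
        (A m).map Polynomial.C * Bv (m + 1) + (B m).map Polynomial.C * Bv m +
          (C m).map Polynomial.C * Bv (m - 1))
    (u : Fin 2 → (Polynomial ℂ →ₗ[ℂ] ℂ))
    (horth : ∀ (m k : ℕ), k < m → Uapp u ((X ^ (2 * k) : Polynomial ℂ) • Bv m) = 0)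
    (hinv : IsUnit (Uapp u (Bv 0)).det) :
    ∀ n : ℕ, blockPow J n 0 0 =
      Uapp u ((X ^ (2 * n) : Polynomial ℂ) • Bv 0) * (Uapp u (Bv 0))⁻¹ := by
  -- local recurrence in "row" form: for k ≤ n,
  -- X² • Bv k = ∑_{j < n+2} (J k j).map C * Bv j
  have hrow : ∀ n k : ℕ, k ≤ n →
      (X ^ 2 : Polynomial ℂ) • Bv k =
        ∑ j ∈ Finset.range (n+2), (J k j).map Polynomial.C * Bv j := by
    intro n k hk
    match k with
    | 0 =>
      rw [← Finset.sum_subset (s₁ := Finset.range 2)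
        (by intro x hx; simp at hx ⊢; omega)
        (by
          intro j hj hj2
          rw [hJ0 0 j (Or.inl (by simp at hj2; omega)), Matrix.map_zero, Matrix.zero_mul]
          exact map_zero _)]
      rw [Finset.sum_range_succ, Finset.sum_range_one, hJd, hJu, hrec0]
      abel
    | m + 1 =>
      rw [← Finset.sum_subset (s₁ := {m, m+1, m+2})
        (by intro x hx; simp at hx ⊢; omega)
        (by
          intro j hj hj2
          simp only [Finset.mem_insert, Finset.mem_singleton] at hj2
          push_neg at hj2
          rw [hJ0 (m+1) j (by omega), Matrix.map_zero, Matrix.zero_mul]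
          exact map_zero _)]
      rw [Finset.sum_insert (by simp), Finset.sum_insert (by simp),
        Finset.sum_singleton, hJl, hJd, hJu, hrec (m+1) (by omega)]
      simp only [Nat.add_sub_cancel]
      abel
  -- eigenrelation for row 0
  have hE : ∀ n : ℕ,
      (X ^ (2 * n) : Polynomial ℂ) • Bv 0 =
        ∑ j ∈ Finset.range (n+1), (blockPow J n 0 j).map Polynomial.C * Bv j := by
    intro n
    induction n with
    | zero => simp [blockPow]
    | succ n ih =>
      have hpow : (X ^ (2 * (n+1)) : Polynomial ℂ) = X ^ 2 * X ^ (2 * n) := by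
        rw [← pow_add]; ring_nf
      calc (X ^ (2 * (n+1)) : Polynomial ℂ) • Bv 0
          = (X ^ 2 : Polynomial ℂ) • ((X ^ (2 * n) : Polynomial ℂ) • Bv 0) := by
            rw [hpow, mul_smul]
        _ = ∑ k ∈ Finset.range (n+1),
              (blockPow J n 0 k).map Polynomial.C * ((X ^ 2 : Polynomial ℂ) • Bv k) := by
            rw [ih, Finset.smul_sum]
            congr 1; ext k
            rw [Matrix.mul_smul]
        _ = ∑ k ∈ Finset.range (n+1), ∑ j ∈ Finset.range (n+2),
              (blockPow J n 0 k).map Polynomial.C * ((J k j).map Polynomial.C * Bv j) := by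
            refine Finset.sum_congr rfl fun k hk => ?_
            rw [hrow n k (by simpa using Nat.lt_succ_iff.mp (Finset.mem_range.mp hk)),
              Matrix.mul_sum]
        _ = ∑ j ∈ Finset.range (n+2),
              (∑ k ∈ Finset.range (n+1), blockPow J n 0 k * J k j).map Polynomial.C * Bv j := by
            rw [Finset.sum_comm]
            refine Finset.sum_congr rfl fun j hj => ?_
            rw [mapC_sum, Matrix.sum_mul]
            refine Finset.sum_congr rfl fun k hk => ?_
            rw [Matrix.map_mul, Matrix.mul_assoc]
        _ = ∑ j ∈ Finset.range (n+2),
              (blockPow J (n+1) 0 j).map Polynomial.C * Bv j := by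
            refine Finset.sum_congr rfl fun j hj => ?_
            rw [blockPow_succ_eq_sum J hJ0]
  intro n
  have key : Uapp u ((X ^ (2 * n) : Polynomial ℂ) • Bv 0) =
      blockPow J n 0 0 * Uapp u (Bv 0) := by
    rw [hE n, Uapp_sum]
    rw [Finset.sum_eq_single_of_mem 0 (by simp) (fun j _ hj => by
      rw [Uapp_mapC_mul]
      have := horth j 0 (Nat.pos_of_ne_zero hj)
      simp only [mul_zero, pow_zero, one_smul] at this
      rw [this, mul_zero])]
    rw [Uapp_mapC_mul]
  rw [key, Matrix.mul_assoc, Matrix.mul_nonsing_inv _ hinv, Matrix.mul_one]
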